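/- arXiv:0901.1247 — 4 statements merged into one kernel-verified Lean document; each statement's English description precedes it below -/
import Mathlib

section
/- Let S be a homeomorphism of a compact metric space M and A ⊂ M a closed subset which is a quasi-attractor: there exists a sequence (n_i) of natural numbers of (upper) density one such that for every x ∈ M, every limit point of the sequence (S^{n_i}x) lies in A. Then every S-invariant Borel probability measure is concentrated on A, i.e., μ(A) = 1 for all μ ∈ M_S(M). -/
open MeasureTheory Filter Topology
open scoped Classical

/-- A strictly increasing sequence of natural numbers has density one if
`|{k ≤ N : k ∈ range n}| / (N+1) → 1`. -/
def HasDensityOne (n : ℕ → ℕ) : Prop :=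
  Tendsto (fun N : ℕ =>
      (((Finset.range (N + 1)).filter (fun k => k ∈ Set.range n)).card : ℝ) / (N + 1))
    atTop (nhds 1)

/-- Let `S` be a homeomorphism of a compact metric space `M` and
`A ⊆ M` a closed quasi-attractor: there is a density-one sequence `(n i)` such that for
every `x ∈ M` every limit point of `(S^[n i] x)` lies in `A`.  Then every `S`-invariant
Borel probability measure is concentrated on `A`: `μ(A) = 1`. -/
theorem lens_stmt8 {M : Type*} [MetricSpace M] [CompactSpace M]
    [MeasurableSpace M] [BorelSpace M]
    (S : M ≃ₜ M) (A : Set M) (hA : IsClosed A)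
    (n : ℕ → ℕ) (hmono : StrictMono n) (hdens : HasDensityOne n)
    (hqa : ∀ x y : M, MapClusterPt y atTop (fun i => (⇑S)^[n i] x) → y ∈ A)
    (μ : Measure M) [IsProbabilityMeasure μ] (hμ : MeasurePreserving S μ μ) :
    μ A = 1 := by
  -- It suffices to show every compact subset of `Aᶜ` is `μ`-null.
  have hKzero : ∀ K : Set M, K ⊆ Aᶜ → IsCompact K → μ K = 0 := by
    intro K hKA hK
    -- Urysohn function: `f = 0` on `A`, `f = 1` on `K`, `0 ≤ f ≤ 1`.
    obtain ⟨f, hf0, hf1, hf01⟩ := exists_continuous_zero_one_of_isClosed hA hK.isClosed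
      (Set.disjoint_left.2 fun x hxA hxK => hKA hxK hxA)
    have hfcont : Continuous f := f.continuous
    have hf_nonneg : ∀ x, 0 ≤ f x := fun x => (hf01 x).1
    have hf_le_one : ∀ x, f x ≤ 1 := fun x => (hf01 x).2
    -- the Cesàro averages
    set g : ℕ → M → ℝ := fun N x =>
      (∑ k ∈ Finset.range (N + 1), f ((⇑S)^[k] x)) / (N + 1) with hg
    have hitercont : ∀ k : ℕ, Continuous fun x : M => (⇑S)^[k] x :=
      fun k => S.continuous.iterate k
    have hgcont : ∀ N, Continuous (g N) := by
      intro N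
      apply Continuous.div_const
      exact continuous_finset_sum _ fun k _ => hfcont.comp (hitercont k)
    -- pointwise: along the subsequence `n i`, `f (S^[n i] x) → 0`
    have hb : ∀ x : M, Tendsto (fun i => f ((⇑S)^[n i] x)) atTop (𝓝 0) := by
      intro x
      apply tendsto_of_subseq_tendsto
      intro ns hns
      obtain ⟨y, -, φ, hφ, hy⟩ := isCompact_univ.tendsto_subseq
        (x := fun i => (⇑S)^[n (ns i)] x) (fun _ => Set.mem_univ _)
      have hyA : y ∈ A := by
        refine hqa x y (MapClusterPt.of_comp (φ := ns ∘ φ)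
          (hns.comp hφ.tendsto_atTop) ?_)
        exact hy.mapClusterPt
      refine ⟨φ, ?_⟩
      have : Tendsto (fun i => f ((⇑S)^[n (ns (φ i))] x)) atTop (𝓝 (f y)) :=
        (hfcont.tendsto y).comp hy
      simpa [Function.comp, hf0 hyA] using this
    -- pointwise convergence of the Cesàro averages to 0
    have hg0 : ∀ x : M, Tendsto (fun N => g N x) atTop (𝓝 0) := by
      intro x
      set b : ℕ → ℝ := fun i => f ((⇑S)^[n i] x) with hbdef
      have hb0 : Tendsto b atTop (𝓝 0) := hb x
      -- upper bound for the averages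
      have hupper : ∀ N : ℕ, g N x ≤
          ((N : ℝ) + 1)⁻¹ * ∑ i ∈ Finset.range (N + 1), b i +
          (1 - (((Finset.range (N + 1)).filter
            (fun k => k ∈ Set.range n)).card : ℝ) / ((N : ℝ) + 1)) := by
        intro N
        set T := (Finset.range (N + 1)).filter (fun k => k ∈ Set.range n) with hT
        have hpos : (0 : ℝ) < (N : ℝ) + 1 := by positivity
        have hsplit : (∑ k ∈ Finset.range (N + 1), f ((⇑S)^[k] x)) =
            (∑ k ∈ T, f ((⇑S)^[k] x)) +
            ∑ k ∈ (Finset.range (N + 1)).filter (fun k => ¬ k ∈ Set.range n),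
              f ((⇑S)^[k] x) :=
          (Finset.sum_filter_add_sum_filter_not _ _ _).symm
        have h1 : (∑ k ∈ T, f ((⇑S)^[k] x)) ≤ ∑ i ∈ Finset.range (N + 1), b i := by
          have hsub : T ⊆ Finset.image n (Finset.range (N + 1)) := by
            intro k hk
            rw [hT, Finset.mem_filter] at hk
            obtain ⟨hkN, i, hi⟩ := hk
            refine Finset.mem_image.2 ⟨i, Finset.mem_range.2 ?_, hi⟩
            have h1 : i ≤ n i := hmono.le_apply
            have h2 : k < N + 1 := Finset.mem_range.1 hkN
            omega
          calc (∑ k ∈ T, f ((⇑S)^[k] x))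
              ≤ ∑ k ∈ Finset.image n (Finset.range (N + 1)), f ((⇑S)^[k] x) :=
                Finset.sum_le_sum_of_subset_of_nonneg hsub
                  (fun k _ _ => hf_nonneg _)
            _ = ∑ i ∈ Finset.range (N + 1), b i :=
                Finset.sum_image (fun a _ c _ h => hmono.injective h)
        have hcard : (((Finset.range (N + 1)).filter
            (fun k => ¬ k ∈ Set.range n)).card : ℝ) = ((N : ℝ) + 1) - (T.card : ℝ) := by
          have htot := Finset.card_filter_add_card_filter_not
            (s := Finset.range (N + 1)) (p := fun k => k ∈ Set.range n)
          rw [Finset.card_range] at htot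
          have hcast : (T.card : ℝ) + (((Finset.range (N + 1)).filter
              (fun k => ¬ k ∈ Set.range n)).card : ℝ) = (N : ℝ) + 1 := by
            rw [hT]; exact_mod_cast htot
          linarith
        have h2 : (∑ k ∈ (Finset.range (N + 1)).filter
              (fun k => ¬ k ∈ Set.range n), f ((⇑S)^[k] x)) ≤
            ((N : ℝ) + 1) - (T.card : ℝ) := by
          calc (∑ k ∈ (Finset.range (N + 1)).filter
                (fun k => ¬ k ∈ Set.range n), f ((⇑S)^[k] x))
              ≤ ∑ _k ∈ (Finset.range (N + 1)).filter
                (fun k => ¬ k ∈ Set.range n), (1 : ℝ) :=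
                Finset.sum_le_sum fun k _ => hf_le_one _
            _ = (((Finset.range (N + 1)).filter
                (fun k => ¬ k ∈ Set.range n)).card : ℝ) := by simp
            _ = ((N : ℝ) + 1) - (T.card : ℝ) := hcard
        have htot : (∑ k ∈ Finset.range (N + 1), f ((⇑S)^[k] x)) ≤
            (∑ i ∈ Finset.range (N + 1), b i) + (((N : ℝ) + 1) - (T.card : ℝ)) := by
          rw [hsplit]; exact add_le_add h1 h2
        have hdiv : g N x ≤
            ((∑ i ∈ Finset.range (N + 1), b i) + (((N : ℝ) + 1) - (T.card : ℝ)))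
              / ((N : ℝ) + 1) := by
          simp only [hg]
          exact (div_le_div_iff_of_pos_right hpos).2 htot
        refine hdiv.trans (le_of_eq ?_)
        field_simp
      -- the upper bound tends to 0
      have hu1 : Tendsto (fun N : ℕ =>
          ((N : ℝ) + 1)⁻¹ * ∑ i ∈ Finset.range (N + 1), b i) atTop (𝓝 0) := by
        have h := hb0.cesaro.comp (tendsto_add_atTop_nat 1)
        refine h.congr fun N => ?_
        simp only [Function.comp]
        push_cast
        ring
      have hu2 : Tendsto (fun N : ℕ =>
          (1 - (((Finset.range (N + 1)).filter
            (fun k => k ∈ Set.range n)).card : ℝ) / ((N : ℝ) + 1))) atTop (𝓝 0) := by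
        have h := Tendsto.sub
          (tendsto_const_nhds : Tendsto (fun _ : ℕ => (1 : ℝ)) atTop (𝓝 1)) hdens
        simpa using h
      have hu := hu1.add hu2
      rw [add_zero] at hu
      refine tendsto_of_tendsto_of_tendsto_of_le_of_le tendsto_const_nhds hu
        (fun N => ?_) hupper
      simp only [hg]
      exact div_nonneg (Finset.sum_nonneg fun k _ => hf_nonneg _) (by positivity)
    -- integrability
    have hfi : ∀ k : ℕ, Integrable (fun x => f ((⇑S)^[k] x)) μ := by
      intro k
      refine Continuous.integrable_of_hasCompactSupport
        (hfcont.comp (hitercont k)) ?_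
      exact IsCompact.of_isClosed_subset isCompact_univ (isClosed_tsupport _)
        (Set.subset_univ _)
    -- invariance of the integral
    have hinv : ∀ k : ℕ, ∫ x, f ((⇑S)^[k] x) ∂μ = ∫ x, f x ∂μ := by
      intro k
      have hmp : MeasurePreserving ((⇑S)^[k]) μ μ := hμ.iterate k
      conv_rhs => rw [← hmp.map_eq]
      exact (integral_map hmp.measurable.aemeasurable
        hfcont.aestronglyMeasurable).symm
    have hint : ∀ N : ℕ, ∫ x, g N x ∂μ = ∫ x, f x ∂μ := by
      intro N
      have hpos : ((N : ℝ) + 1) ≠ 0 := by positivity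
      calc ∫ x, g N x ∂μ
          = (∑ k ∈ Finset.range (N + 1), ∫ x, f ((⇑S)^[k] x) ∂μ) / ((N : ℝ) + 1) := by
            simp only [hg]
            rw [integral_div, integral_finset_sum _ fun k _ => hfi k]
        _ = (((N : ℝ) + 1) * ∫ x, f x ∂μ) / ((N : ℝ) + 1) := by
            simp [hinv, Finset.sum_const, Finset.card_range]
            try ring
        _ = ∫ x, f x ∂μ := by field_simp
    -- dominated convergence
    have hdom : Tendsto (fun N => ∫ x, g N x ∂μ) atTop (𝓝 (∫ _x, (0 : ℝ) ∂μ)) := by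
      refine tendsto_integral_of_dominated_convergence (fun _ => (1 : ℝ))
        (fun N => (hgcont N).aestronglyMeasurable) (integrable_const 1)
        (fun N => ae_of_all _ fun x => ?_) (ae_of_all _ fun x => hg0 x)
      have hnn : 0 ≤ g N x := by
        simp only [hg]
        exact div_nonneg (Finset.sum_nonneg fun k _ => hf_nonneg _) (by positivity)
      rw [Real.norm_eq_abs, abs_of_nonneg hnn]
      simp only [hg]
      have hpos : (0 : ℝ) < (N : ℝ) + 1 := by positivity
      rw [div_le_one hpos]
      calc (∑ k ∈ Finset.range (N + 1), f ((⇑S)^[k] x))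
          ≤ ∑ _k ∈ Finset.range (N + 1), (1 : ℝ) :=
            Finset.sum_le_sum fun k _ => hf_le_one _
        _ = (N : ℝ) + 1 := by simp
    have hfzero : ∫ x, f x ∂μ = 0 := by
      have h1 : Tendsto (fun N => ∫ x, g N x ∂μ) atTop (𝓝 (∫ x, f x ∂μ)) := by
        refine tendsto_const_nhds.congr fun N => (hint N).symm
      have h2 : Tendsto (fun N => ∫ x, g N x ∂μ) atTop (𝓝 0) := by
        simpa using hdom
      exact tendsto_nhds_unique h1 h2
    -- conclude `μ K = 0`
    have hKreal : (μ K).toReal ≤ 0 := by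
      have e1 : ∫ _x in K, (1 : ℝ) ∂μ = (μ K).toReal := by
        rw [setIntegral_const]; simp; rfl
      have e2 : ∫ x in K, f x ∂μ = ∫ _x in K, (1 : ℝ) ∂μ :=
        setIntegral_congr_fun hK.measurableSet fun x hx => hf1 hx
      have e3 : ∫ x in K, f x ∂μ ≤ ∫ x, f x ∂μ := by
        refine setIntegral_le_integral ?_ (ae_of_all _ hf_nonneg)
        simpa using hfi 0
      linarith
    have := ENNReal.toReal_eq_zero_iff (μ K)
    rcases this.1 (le_antisymm hKreal ENNReal.toReal_nonneg) with h | h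
    · exact h
    · exact absurd h (measure_ne_top μ K)
  -- inner regularity: `μ Aᶜ = 0`
  have hAc : μ Aᶜ = 0 := by
    rw [hA.isOpen_compl.measurableSet.measure_eq_iSup_isCompact]
    refine le_antisymm ?_ zero_le
    refine iSup_le fun K => iSup_le fun hK => iSup_le fun hKc =>
      le_of_eq (hKzero K hK hKc)
  have hsum : μ A + μ Aᶜ = 1 := by
    rw [measure_add_measure_compl hA.measurableSet, measure_univ]
  simpa [hAc] using hsum
end

section
/- Let S be a homeomorphism of a compact metric space M and A ⊂ M a closed quasi-attractor (there is a density-one sequence (n_i) such that for every x ∈ M all limit points of (S^{n_i}x) lie in A). Then every minimal subset of (M,S) is contained in A. -/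
open MeasureTheory Filter
open scoped Classical

/-- A density-one set of naturals is thick: it contains arbitrarily long blocks of
consecutive integers, starting arbitrarily late. -/
lemma density_thick (n : ℕ → ℕ) (hdens : HasDensityOne n) (g a₀ : ℕ) (hg : 0 < g) :
    ∃ a, a₀ ≤ a ∧ ∀ i < g, a + i ∈ Set.range n := by
  by_contra hcon
  push_neg at hcon
  choose i hig hin using fun k : ℕ => hcon (a₀ + g * k) (Nat.le_add_right _ _)
  -- complement count
  set c : ℕ → ℕ := fun N => ((Finset.range (N + 1)).filter (fun k => k ∈ Set.range n)).card
    with hc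
  set b : ℕ → ℕ := fun N => ((Finset.range (N + 1)).filter (fun k => k ∉ Set.range n)).card
    with hb
  have hcb : ∀ N, c N + b N = N + 1 := by
    intro N
    have := Finset.card_filter_add_card_filter_not
      (s := Finset.range (N + 1)) (p := fun k => k ∈ Set.range n)
    simpa [hc, hb, Finset.card_range] using this
  -- each block contributes one element to the complement
  have hbound : ∀ m : ℕ, m ≤ b (a₀ + g * m) := by
    intro m
    have : (Finset.range m).card ≤ b (a₀ + g * m) := by
      apply Finset.card_le_card_of_injOn (fun k => a₀ + g * k + i k)
      · intro k hk
        simp only [Finset.mem_coe, Finset.mem_range] at hk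
        simp only [hb, Finset.mem_coe, Finset.mem_filter, Finset.mem_range]
        constructor
        · have h1 : g * (k + 1) ≤ g * m := Nat.mul_le_mul_left g hk
          have h2 : g * (k + 1) = g * k + g := by ring
          have h3 : i k < g := hig k
          omega
        · exact hin k
      · intro k hk k' hk' heq
        simp only at heq
        by_contra hne
        rcases Nat.lt_or_ge k k' with hlt | hge
        · have h2 : g * (k + 1) ≤ g * k' := Nat.mul_le_mul_left g hlt
          have h3 : g * (k + 1) = g * k + g := by ring
          have h4 : i k < g := hig k
          omega
        · have hlt : k' < k := by omega
          have h2 : g * (k' + 1) ≤ g * k := Nat.mul_le_mul_left g hlt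
          have h3 : g * (k' + 1) = g * k' + g := by ring
          have h4 : i k' < g := hig k'
          omega
    simpa using this
  -- eventually the density is close to 1
  have heps : (0:ℝ) < 1 / (2 * g) := by positivity
  have hev : ∀ᶠ N in atTop, 1 - 1 / (2 * (g:ℝ)) < (c N : ℝ) / (N + 1) := by
    apply hdens.eventually
    apply eventually_gt_nhds
    linarith
  obtain ⟨N₀, hN₀⟩ := eventually_atTop.mp hev
  set m : ℕ := max (a₀ + 1) N₀ with hm
  set N : ℕ := a₀ + g * m with hN
  have hmN : N₀ ≤ N := by
    have h1 : m ≤ g * m := Nat.le_mul_of_pos_left m hg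
    have h2 : N₀ ≤ m := le_max_right _ _
    omega
  have hlt := hN₀ N hmN
  have hcN : (c N : ℝ) = (N : ℝ) + 1 - (b N : ℝ) := by
    have h := hcb N
    have h' : (c N : ℝ) + (b N : ℝ) = (N : ℝ) + 1 := by exact_mod_cast h
    linarith
  rw [hcN] at hlt
  have hNpos : (0:ℝ) < (N : ℝ) + 1 := by positivity
  have hgpos : (0:ℝ) < 2 * (g:ℝ) := by positivity
  have hblt : 2 * (g:ℝ) * (b N) < (N:ℝ) + 1 := by
    rw [lt_div_iff₀ hNpos] at hlt
    have hb1 : (b N : ℝ) < 1 / (2 * g) * ((N:ℝ) + 1) := by nlinarith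
    have h5 := mul_lt_mul_of_pos_left hb1 hgpos
    have h6 : 2 * (g:ℝ) * (1 / (2 * g) * ((N:ℝ) + 1)) = (N:ℝ) + 1 := by field_simp
    linarith
  have hbnat : 2 * g * b N < N + 1 := by exact_mod_cast hblt
  have hmb : m ≤ b N := hbound m
  have h1 : g * m ≤ g * b N := Nat.mul_le_mul_left g hmb
  have h2 : m ≤ g * m := Nat.le_mul_of_pos_left m hg
  have h3 : a₀ + 1 ≤ m := le_max_left _ _
  -- 2*(g*m) ≤ 2*(g*b N) < N+1 = a₀ + g*m + 1
  have h4 : 2 * (g * b N) < a₀ + g * m + 1 := by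
    have : 2 * g * b N = 2 * (g * b N) := by ring
    omega
  omega

/-- Let `S` be a homeomorphism of a compact metric space `M` and
`A ⊆ M` a closed quasi-attractor (there is a density-one sequence `(n i)` such that for
every `x` all limit points of `(S^[n i] x)` lie in `A`).  Then every minimal subset of
`(M, S)` is contained in `A`. -/
theorem lens_stmt9 {M : Type*} [MetricSpace M] [CompactSpace M]
    (S : M ≃ₜ M) (A : Set M) (hA : IsClosed A)
    (n : ℕ → ℕ) (hmono : StrictMono n) (hdens : HasDensityOne n)
    (hqa : ∀ x y : M, MapClusterPt y atTop (fun i => (⇑S)^[n i] x) → y ∈ A)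
    (K : Set M) (hKne : K.Nonempty) (hKc : IsClosed K) (hKinv : ⇑S '' K = K)
    (hmin : ∀ K' ⊆ K, K'.Nonempty → IsClosed K' → ⇑S '' K' = K' → K' = K) :
    K ⊆ A := by
  intro y hy
  set e : Equiv.Perm M := S.toEquiv with he
  have hcoeS : ⇑e = ⇑S := rfl
  have hcoeSymm : ⇑(e⁻¹) = ⇑S.symm := by
    rw [Equiv.Perm.inv_def]; rfl
  have hsymmK : ⇑S.symm '' K = K := by
    conv_lhs => rw [← hKinv]
    rw [← Set.image_comp]
    simp
  -- continuity and invariance for all integer powers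
  have hcont : ∀ m : ℤ, Continuous ⇑(e ^ m) ∧ ⇑(e ^ m) '' K = K := by
    intro m
    induction m using Int.induction_on with
    | zero =>
        constructor
        · simp only [zpow_zero, Equiv.Perm.coe_one]; exact continuous_id
        · simp only [zpow_zero, Equiv.Perm.coe_one]; simp
    | succ k ih =>
        have hco : ⇑(e ^ ((k:ℤ) + 1)) = ⇑(e ^ (k:ℤ)) ∘ ⇑S := by
          funext x
          rw [zpow_add_one]
          exact Equiv.Perm.mul_apply _ _ _
        refine ⟨?_, ?_⟩
        · rw [hco]; exact ih.1.comp S.continuous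
        · rw [hco, Set.image_comp, hKinv, ih.2]
    | pred k ih =>
        have hco : ⇑(e ^ (-(k:ℤ) - 1)) = ⇑(e ^ (-(k:ℤ))) ∘ ⇑S.symm := by
          funext x
          rw [zpow_sub_one]
          rw [show (e ^ (-(k:ℤ)) * e⁻¹) x = (e ^ (-(k:ℤ))) (e⁻¹ x) from
            Equiv.Perm.mul_apply _ _ _, hcoeSymm]
          rfl
        refine ⟨?_, ?_⟩
        · rw [hco]; exact ih.1.comp S.symm.continuous
        · rw [hco, Set.image_comp, hsymmK, ih.2]
  refine hqa y y ?_
  rw [mapClusterPt_iff_frequently]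
  intro s hs
  rw [frequently_atTop]
  intro i₀
  obtain ⟨U, hUs, hUo, hyU⟩ := mem_nhds_iff.mp hs
  -- the complement of the union of preimages is invariant, closed, and misses y
  have hcover : K ⊆ ⋃ m : ℤ, ⇑(e ^ m) ⁻¹' U := by
    by_contra hcov
    rw [Set.not_subset] at hcov
    obtain ⟨z, hz1, hz2⟩ := hcov
    set K' : Set M := K \ ⋃ m : ℤ, ⇑(e ^ m) ⁻¹' U with hK'
    have hK'cl : IsClosed K' :=
      hKc.sdiff (isOpen_iUnion fun m => hUo.preimage (hcont m).1)
    have hK'inv : ⇑S '' K' = K' := by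
      apply Set.Subset.antisymm
      · rintro _ ⟨w, ⟨hwK, hwU⟩, rfl⟩
        refine ⟨hKinv ▸ Set.mem_image_of_mem _ hwK, ?_⟩
        simp only [Set.mem_iUnion, Set.mem_preimage] at hwU ⊢
        rintro ⟨m, hm⟩
        refine hwU ⟨m + 1, ?_⟩
        rwa [zpow_add_one, Equiv.Perm.mul_apply]
      · rintro w ⟨hwK, hwU⟩
        refine ⟨S.symm w, ⟨?_, ?_⟩, by simp⟩
        · exact hsymmK ▸ Set.mem_image_of_mem _ hwK
        · simp only [Set.mem_iUnion, Set.mem_preimage] at hwU ⊢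
          rintro ⟨m, hm⟩
          refine hwU ⟨m - 1, ?_⟩
          rw [zpow_sub_one]
          rw [show (e ^ m * e⁻¹) w = (e ^ m) (e⁻¹ w) from Equiv.Perm.mul_apply _ _ _,
            hcoeSymm]
          exact hm
    have hKeq := hmin K' Set.diff_subset ⟨z, hz1, hz2⟩ hK'cl hK'inv
    have hyK' : y ∈ K' := hKeq ▸ hy
    refine hyK'.2 (Set.mem_iUnion.mpr ⟨0, ?_⟩)
    simpa using hyU
  obtain ⟨F, hF⟩ := hKc.isCompact.elim_finite_subcover (fun m : ℤ => ⇑(e ^ m) ⁻¹' U)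
    (fun m => hUo.preimage (hcont m).1) hcover
  set L : ℕ := F.sup Int.natAbs with hL
  obtain ⟨a, ha₀, hthick⟩ := density_thick n hdens (2 * L + 1) (n i₀) (by omega)
  -- move y forward a+L steps, then back/forward within F
  have hzK : (⇑(e ^ ((a + L : ℕ) : ℤ)) y) ∈ K :=
    (hcont _).2 ▸ Set.mem_image_of_mem _ hy
  obtain ⟨m, hmF, hmU⟩ := Set.mem_iUnion₂.mp (hF hzK)
  have hmL : m.natAbs ≤ L := Finset.le_sup hmF
  have hmabs : -(L:ℤ) ≤ m ∧ m ≤ (L:ℤ) := by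
    constructor <;> [skip; skip] <;> omega
  -- the actual time
  set t : ℤ := m + ((a + L : ℕ) : ℤ) with ht
  have htnn : (0:ℤ) ≤ t := by push_cast [ht]; omega
  set tn : ℕ := t.toNat with htn
  have htcast : (tn : ℤ) = t := Int.toNat_of_nonneg htnn
  have hta : a ≤ tn ∧ tn ≤ a + 2 * L := by
    constructor <;> omega
  obtain ⟨i', hi'⟩ : tn ∈ Set.range n := by
    have h1 := hthick (tn - a) (by omega)
    have h2 : a + (tn - a) = tn := by omega
    rwa [h2] at h1
  have hi₀ : i₀ ≤ i' := by
    have h1 : n i₀ ≤ n i' := by omega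
    exact hmono.le_iff_le.mp h1
  refine ⟨i', hi₀, hUs ?_⟩
  -- S^[n i'] y = e^t y ∈ U
  have hiter : (⇑S)^[n i'] y = ⇑(e ^ t) y := by
    rw [hi', ← htcast, zpow_natCast, ← hcoeS, ← Equiv.Perm.iterate_eq_pow]
  rw [hiter]
  have : (e ^ t) y = (e ^ m) ((e ^ ((a + L : ℕ) : ℤ)) y) := by
    rw [← Equiv.Perm.mul_apply, ← zpow_add]
  rw [this]
  exact hmU
end

section
/- Let T be a measure-preserving automorphism of a standard probability space (X,B,μ) that is rigid: there is an increasing sequence (n_i) with U_T^{n_i} → Id strongly on L²(μ). Then the lens T̃ : C₂(μ) → C₂(μ), T̃(ξ) = (T×T)_*ξ, is uniformly rigid: T̃^{n_i} → Id uniformly on C₂(μ) (equivalently, in the metric induced by the weak operator topology on the corresponding Markov operators). -/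
open MeasureTheory Filter Metric Set ENNReal NNReal

lemma lens_meas_tendsto {X : Type*} [MetricSpace X] [CompactSpace X]
    [MeasurableSpace X] [BorelSpace X]
    (μ : Measure X) [IsProbabilityMeasure μ]
    (T : X ≃ᵐ X) (hT : MeasurePreserving T μ μ) (n : ℕ → ℕ)
    (hrig : ∀ f : Lp ℝ 2 μ,
      Tendsto (fun i =>
          ‖Lp.compMeasurePreserving ((⇑T)^[n i]) (hT.iterate (n i)) f - f‖)
        atTop (nhds 0))
    {ε δ : ℝ} (hε : 0 < ε) (hδ : 0 < δ) :
    ∀ᶠ i in atTop, μ {x | ε ≤ dist ((⇑T)^[n i] x) x} < ENNReal.ofReal δ := by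
  have hX : Nonempty X := by
    by_contra h
    rw [not_nonempty_iff] at h
    have h1 : μ univ = 1 := measure_univ
    rw [Set.univ_eq_empty_iff.mpr h, measure_empty] at h1
    exact zero_ne_one h1
  have hTk : ∀ k, Measurable ((⇑T)^[k]) := fun k => T.measurable.iterate k
  -- finite cover by balls of radius ε/4
  obtain ⟨t, ht⟩ := isCompact_univ.elim_finite_subcover (fun c : X => ball c (ε / 4))
    (fun c => isOpen_ball) (fun x _ => mem_iUnion.mpr ⟨x, mem_ball_self (by linarith)⟩)
  have htne : t.Nonempty := by
    obtain ⟨x⟩ := hX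
    obtain ⟨c, hc, -⟩ := mem_iUnion₂.mp (ht (mem_univ x))
    exact ⟨c, hc⟩
  set δ' : ℝ := δ / (t.card + 1) with hδ'def
  have hδ' : 0 < δ' := by positivity
  -- the "bad" functions
  set g : X → ℕ → X → ℝ := fun c i x => dist ((⇑T)^[n i] x) c - dist x c with hgdef
  have hgmeas : ∀ c i, Measurable (g c i) := fun c i =>
    ((hTk (n i)).dist measurable_const).sub (measurable_id.dist measurable_const)
  -- bound on X from compactness
  have hbound : ∀ x c : X, dist x c ≤ diam (univ : Set X) :=
    fun x c => dist_le_diam_of_mem isCompact_univ.isBounded (mem_univ x) (mem_univ c)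
  -- eventually all bad sets are small
  have key : ∀ c : X, ∀ᶠ i in atTop,
      μ {x | ENNReal.ofReal (ε / 2) ≤ (‖g c i x‖₊ : ℝ≥0∞)} < ENNReal.ofReal δ' := by
    intro c
    have hmem : MemLp (fun x => dist x c) 2 μ :=
      MemLp.of_bound (continuous_id.dist continuous_const).aestronglyMeasurable
        (diam (univ : Set X)) (Eventually.of_forall fun x => by
          rw [Real.norm_eq_abs, abs_of_nonneg dist_nonneg]; exact hbound x c)
    set F : Lp ℝ 2 μ := hmem.toLp _ with hF
    have hGae : ∀ i,
        (⇑(Lp.compMeasurePreserving ((⇑T)^[n i]) (hT.iterate (n i)) F - F) : X → ℝ)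
          =ᵐ[μ] g c i := by
      intro i
      filter_upwards [Lp.coeFn_sub (Lp.compMeasurePreserving ((⇑T)^[n i]) (hT.iterate (n i)) F) F,
        Lp.coeFn_compMeasurePreserving F (hT.iterate (n i)),
        (hT.iterate (n i)).quasiMeasurePreserving.ae_eq_comp (hmem.coeFn_toLp),
        hmem.coeFn_toLp] with x h1 h2 h3 h4
      rw [h1, Pi.sub_apply, h2]
      simp only [Function.comp_apply] at h3 ⊢
      rw [h3, h4]
    have heq : ∀ i, eLpNorm (g c i) 2 μ = ENNReal.ofReal
        ‖Lp.compMeasurePreserving ((⇑T)^[n i]) (hT.iterate (n i)) F - F‖ := by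
      intro i
      rw [← eLpNorm_congr_ae (hGae i), Lp.norm_def,
        ENNReal.ofReal_toReal (Lp.eLpNorm_ne_top _)]
    have h0 : Tendsto (fun i => eLpNorm (g c i) 2 μ) atTop (nhds 0) := by
      simp only [heq]
      have := ENNReal.tendsto_ofReal (hrig F)
      rwa [ENNReal.ofReal_zero] at this
    have hRHS : Tendsto (fun i =>
        (ENNReal.ofReal (ε / 2))⁻¹ ^ (2 : ℝ≥0∞).toReal * eLpNorm (g c i) 2 μ ^ (2 : ℝ≥0∞).toReal)
        atTop (nhds 0) := by
      have hc : (ENNReal.ofReal (ε / 2))⁻¹ ^ (2 : ℝ≥0∞).toReal ≠ ∞ :=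
        ENNReal.rpow_ne_top_of_nonneg ENNReal.toReal_nonneg
          (ENNReal.inv_ne_top.mpr (ENNReal.ofReal_pos.mpr (by linarith)).ne')
      exact (ENNReal.tendsto_const_mul_rpow_nhds_zero_of_pos hc
        (by simp : (0:ℝ) < (2 : ℝ≥0∞).toReal)).comp h0
    have hcheb : ∀ i, μ {x | ENNReal.ofReal (ε / 2) ≤ (‖g c i x‖₊ : ℝ≥0∞)} ≤
        (ENNReal.ofReal (ε / 2))⁻¹ ^ (2 : ℝ≥0∞).toReal * eLpNorm (g c i) 2 μ ^ (2 : ℝ≥0∞).toReal :=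
      fun i => meas_ge_le_mul_pow_eLpNorm_enorm μ two_ne_zero ENNReal.ofNat_ne_top
        (hgmeas c i).aestronglyMeasurable (ENNReal.ofReal_pos.mpr (by linarith)).ne' (fun h => absurd h ENNReal.ofReal_ne_top)
    filter_upwards [hRHS.eventually_lt_const (ENNReal.ofReal_pos.mpr hδ')] with i hi
    exact lt_of_le_of_lt (hcheb i) hi
  have keyall : ∀ᶠ i in atTop, ∀ c ∈ (t : Set X),
      μ {x | ENNReal.ofReal (ε / 2) ≤ (‖g c i x‖₊ : ℝ≥0∞)} < ENNReal.ofReal δ' :=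
    (eventually_all_finite t.finite_toSet).2 fun c _ => key c
  filter_upwards [keyall] with i hi
  -- inclusion in union of bad sets
  have incl : {x | ε ≤ dist ((⇑T)^[n i] x) x} ⊆
      ⋃ c ∈ t, {x | ENNReal.ofReal (ε / 2) ≤ (‖g c i x‖₊ : ℝ≥0∞)} := by
    intro x hx
    obtain ⟨c, hc, hxc⟩ := mem_iUnion₂.mp (ht (mem_univ x))
    refine mem_iUnion₂.mpr ⟨c, hc, ?_⟩
    have hxc' : dist x c < ε / 4 := mem_ball.mp hxc
    have h1 : dist ((⇑T)^[n i] x) x ≤ dist ((⇑T)^[n i] x) c + dist c x := dist_triangle _ _ _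
    have h2 : ε / 2 ≤ g c i x := by
      have := hx
      simp only [mem_setOf_eq] at this
      rw [hgdef]
      simp only
      rw [dist_comm c x] at h1
      linarith
    have h3 : ε / 2 ≤ ‖g c i x‖ := le_trans h2 (le_abs_self _)
    simp only [mem_setOf_eq, ← norm_toNNReal]
    exact ENNReal.ofReal_le_ofReal h3
  calc μ {x | ε ≤ dist ((⇑T)^[n i] x) x}
      ≤ ∑ c ∈ t, μ {x | ENNReal.ofReal (ε / 2) ≤ (‖g c i x‖₊ : ℝ≥0∞)} :=
        (measure_mono incl).trans (measure_biUnion_finset_le t _)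
    _ ≤ ∑ _c ∈ t, ENNReal.ofReal δ' := Finset.sum_le_sum fun c hc => (hi c hc).le
    _ = (t.card : ℝ≥0∞) * ENNReal.ofReal δ' := by
        rw [Finset.sum_const, nsmul_eq_mul]
    _ = ENNReal.ofReal (t.card * δ') := by
        rw [ENNReal.ofReal_mul (by positivity), ENNReal.ofReal_natCast]
    _ < ENNReal.ofReal δ := by
        apply ENNReal.ofReal_lt_ofReal_iff hδ |>.mpr
        rw [hδ'def, mul_div_assoc', div_lt_iff₀ (by positivity : (0:ℝ) < (t.card:ℝ)+1)]
        nlinarith [Nat.cast_nonneg (α := ℝ) t.card]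
lemma lens_lp_edist_le {Z : Type*} [MeasurableSpace Z] [PseudoMetricSpace Z]
    [OpensMeasurableSpace Z] (ξ : Measure Z) {S : Z → Z} (hS : Measurable S) {ε : ℝ}
    (hε : 0 ≤ ε) (hbad : ξ {z | ε ≤ dist z (S z)} ≤ ENNReal.ofReal ε) :
    levyProkhorovEDist (ξ.map S) ξ ≤ ENNReal.ofReal ε := by
  apply levyProkhorovEDist_le_of_forall
  intro η B hη hηtop hB
  have hεη : ε < η.toReal := by
    have := (ENNReal.toReal_lt_toReal ENNReal.ofReal_ne_top hηtop.ne).mpr hη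
    rwa [ENNReal.toReal_ofReal hε] at this
  have hbad' : ξ {z | ε ≤ dist z (S z)} ≤ η := hbad.trans hη.le
  constructor
  · rw [Measure.map_apply hS hB]
    have incl : S ⁻¹' B ⊆ thickening η.toReal B ∪ {z | ε ≤ dist z (S z)} := by
      intro z hz
      by_cases h : ε ≤ dist z (S z)
      · exact Or.inr h
      · exact Or.inl ((mem_thickening_iff).2 ⟨S z, hz, lt_trans (lt_of_not_ge h) hεη⟩)
    calc ξ (S ⁻¹' B) ≤ ξ (thickening η.toReal B ∪ {z | ε ≤ dist z (S z)}) := measure_mono incl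
      _ ≤ ξ (thickening η.toReal B) + ξ {z | ε ≤ dist z (S z)} := measure_union_le _ _
      _ ≤ ξ (thickening η.toReal B) + η := add_le_add le_rfl hbad'
  · rw [Measure.map_apply hS isOpen_thickening.measurableSet]
    have incl : B ⊆ S ⁻¹' (thickening η.toReal B) ∪ {z | ε ≤ dist z (S z)} := by
      intro z hz
      by_cases h : ε ≤ dist z (S z)
      · exact Or.inr h
      · refine Or.inl ((mem_thickening_iff).2 ⟨z, hz, ?_⟩)
        rw [dist_comm]
        exact lt_trans (lt_of_not_ge h) hεη
    calc ξ B ≤ ξ (S ⁻¹' (thickening η.toReal B) ∪ {z | ε ≤ dist z (S z)}) := measure_mono incl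
      _ ≤ ξ (S ⁻¹' (thickening η.toReal B)) + ξ {z | ε ≤ dist z (S z)} := measure_union_le _ _
      _ ≤ ξ (S ⁻¹' (thickening η.toReal B)) + η := add_le_add le_rfl hbad'
lemma lens_iterate_map {X : Type*} [MeasurableSpace X] (F : X → X) (hF : Measurable F)
    (k : ℕ) (ξ : Measure X) :
    (fun ρ : Measure X => ρ.map F)^[k] ξ = ξ.map F^[k] := by
  induction k with
  | zero => simp [Measure.map_id]
  | succ k ih =>
    rw [Function.iterate_succ_apply', ih, Measure.map_map hF (hF.iterate k),
      ← Function.iterate_succ' F k]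

/-- Let `T` be a measure-preserving automorphism of `(X, B, μ)` which
is rigid along an increasing sequence `(n i)`: the Koopman operators `U_T^{n i}` tend to
the identity strongly on `L²(μ)`.  Then the lens `T̃(ξ) = (T × T)_* ξ` is uniformly
rigid along `(n i)`: the supremum over all couplings `ξ ∈ C₂(μ)` of the
(Lévy–Prokhorov) distance from `T̃^{n i} ξ` to `ξ` tends to `0`. -/
theorem lens_stmt10 {X : Type*} [MetricSpace X] [CompactSpace X]
    [MeasurableSpace X] [BorelSpace X]
    (μ : Measure X) [IsProbabilityMeasure μ]
    (T : X ≃ᵐ X) (hT : MeasurePreserving T μ μ)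
    (n : ℕ → ℕ) (hmono : StrictMono n)
    (hrig : ∀ f : Lp ℝ 2 μ,
      Tendsto (fun i =>
          ‖Lp.compMeasurePreserving ((⇑T)^[n i]) (hT.iterate (n i)) f - f‖)
        atTop (nhds 0)) :
    Tendsto (fun i =>
        ⨆ ξ : {ξ : Measure (X × X) // IsProbabilityMeasure ξ ∧
            ξ.map Prod.fst = μ ∧ ξ.map Prod.snd = μ},
          levyProkhorovDist
            ((fun ρ : Measure (X × X) => ρ.map (Prod.map ⇑T ⇑T))^[n i] ξ.1) ξ.1)
      atTop (nhds 0) := by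
  have hTk : ∀ k, Measurable ((⇑T)^[k]) := fun k => T.measurable.iterate k
  have hPm : Measurable (Prod.map ⇑T ⇑T) := T.measurable.prodMap T.measurable
  have hSm : ∀ k, Measurable (Prod.map ((⇑T)^[k]) ((⇑T)^[k])) :=
    fun k => (hTk k).prodMap (hTk k)
  rw [tendsto_order]
  constructor
  · intro a ha
    refine Eventually.of_forall fun i => lt_of_lt_of_le ha ?_
    exact Real.iSup_nonneg fun ξ => ENNReal.toReal_nonneg
  · intro b hb
    -- the set where T^[n i] moves points by at least b/2 is eventually small
    filter_upwards [lens_meas_tendsto μ T hT n hrig (by linarith : (0:ℝ) < b / 2)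
      (by linarith : (0:ℝ) < b / 4)] with i hi
    have key : ∀ ξ : {ξ : Measure (X × X) // IsProbabilityMeasure ξ ∧
        ξ.map Prod.fst = μ ∧ ξ.map Prod.snd = μ},
        levyProkhorovDist
          ((fun ρ : Measure (X × X) => ρ.map (Prod.map ⇑T ⇑T))^[n i] ξ.1) ξ.1 ≤ b / 2 := by
      rintro ⟨ξ, hprob, hfst, hsnd⟩
      rw [lens_iterate_map _ hPm, Prod.map_iterate]
      set S := Prod.map ((⇑T)^[n i]) ((⇑T)^[n i]) with hS
      set A : Set X := {x | b / 2 ≤ dist ((⇑T)^[n i] x) x} with hA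
      have hAm : MeasurableSet A :=
        measurableSet_le measurable_const ((hTk (n i)).dist measurable_id)
      -- bound the bad set in the product
      have hbadsub : {z : X × X | b / 2 ≤ dist z (S z)} ⊆ Prod.fst ⁻¹' A ∪ Prod.snd ⁻¹' A := by
        rintro ⟨x, y⟩ hz
        simp only [mem_setOf_eq, hS, Prod.dist_eq, Prod.map_apply] at hz
        rcases le_max_iff.mp hz with h | h
        · exact Or.inl (by simpa [hA, dist_comm] using h)
        · exact Or.inr (by simpa [hA, dist_comm] using h)
      have hbad : ξ {z : X × X | b / 2 ≤ dist z (S z)} ≤ ENNReal.ofReal (b / 2) := by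
        have h1 : ξ (Prod.fst ⁻¹' A) = μ A := by
          rw [← hfst, Measure.map_apply measurable_fst hAm]
        have h2 : ξ (Prod.snd ⁻¹' A) = μ A := by
          rw [← hsnd, Measure.map_apply measurable_snd hAm]
        calc ξ {z : X × X | b / 2 ≤ dist z (S z)}
            ≤ ξ (Prod.fst ⁻¹' A ∪ Prod.snd ⁻¹' A) := measure_mono hbadsub
          _ ≤ ξ (Prod.fst ⁻¹' A) + ξ (Prod.snd ⁻¹' A) := measure_union_le _ _
          _ = μ A + μ A := by rw [h1, h2]
          _ ≤ ENNReal.ofReal (b / 4) + ENNReal.ofReal (b / 4) := add_le_add hi.le hi.le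
          _ = ENNReal.ofReal (b / 2) := by
              rw [← ENNReal.ofReal_add (by linarith) (by linarith)]
              congr 1
              ring
      have hedist := lens_lp_edist_le ξ (hSm (n i)) (by linarith : (0:ℝ) ≤ b / 2) hbad
      exact ENNReal.toReal_le_of_le_ofReal (by linarith) hedist
    exact lt_of_le_of_lt (Real.iSup_le key (by linarith)) (by linarith)
end

section
/- Let T be an ergodic automorphism of a standard probability space. If the lens T̃ on C₂(μ) is topologically transitive, then T is weakly mixing. -/
open MeasureTheory Filter

/-- The topological lens of an automorphism `T`, acting on probability measures on
`X × X` by pushforward under `T × T`. -/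
noncomputable def lensP {X : Type*} [MeasurableSpace X] (T : X ≃ᵐ X)
    (ξ : ProbabilityMeasure (X × X)) : ProbabilityMeasure (X × X) :=
  ξ.map (f := ⇑(T.prodCongr T)) (T.prodCongr T).measurable.aemeasurable

/-- The set `C₂(μ)` of couplings of `μ` inside the space of probability measures on
`X × X` (with the weak* topology). -/
def couplingSet {X : Type*} [MeasurableSpace X] (μ : Measure X) :
    Set (ProbabilityMeasure (X × X)) :=
  {ξ | (ξ : Measure (X × X)).map Prod.fst = μ ∧ (ξ : Measure (X × X)).map Prod.snd = μ}

/-- Integrability of a uniformly bounded a.e.-strongly-measurable function w.r.t. a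
finite measure. -/
lemma lens_integrable_of_abs_le {α : Type*} [MeasurableSpace α] {ρ : Measure α}
    [IsFiniteMeasure ρ] {f : α → ℝ} (hf : AEStronglyMeasurable f ρ) {C : ℝ}
    (h : ∀ a, |f a| ≤ C) : Integrable f ρ :=
  Integrable.mono' (integrable_const C) hf
    (Filter.Eventually.of_forall fun a => by simpa [Real.norm_eq_abs] using h a)

/-- Clamping a real number to `[-1, 1]` moves it closer to any point of `[-1, 1]`. -/
lemma lens_abs_sub_clamp_le {a b : ℝ} (ha : |a| ≤ 1) :
    |a - max (-1) (min 1 b)| ≤ |a - b| := by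
  rw [abs_le] at ha
  rcases le_total b (-1) with hb | hb
  · have h1 : min 1 b = b := min_eq_right (by linarith)
    have h2 : max (-1 : ℝ) b = -1 := max_eq_left hb
    rw [h1, h2, abs_of_nonneg (by linarith : (0:ℝ) ≤ a - -1),
      abs_of_nonneg (by linarith : (0:ℝ) ≤ a - b)]
    linarith
  · rcases le_total 1 b with hb1 | hb1
    · have h1 : min 1 b = 1 := min_eq_left hb1
      have h2 : max (-1 : ℝ) (1 : ℝ) = 1 := by norm_num
      rw [h1, h2, abs_of_nonpos (by linarith : a - 1 ≤ 0),
        abs_of_nonpos (by linarith : a - b ≤ 0)]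
      linarith
    · have h1 : min 1 b = b := min_eq_right hb1
      have h2 : max (-1 : ℝ) b = b := max_eq_right hb
      rw [h1, h2]

/-- Let `T` be an ergodic automorphism of a standard probability
space.  If the lens `T̃` is topologically transitive on `C₂(μ)` (with the weak*
topology), then `T` is weakly mixing, i.e. `T × T` is ergodic for `μ ⊗ μ`. -/
theorem lens_stmt14 {X : Type*} [MetricSpace X] [CompactSpace X]
    [SecondCountableTopology X] [MeasurableSpace X] [BorelSpace X]
    (μ : Measure X) [IsProbabilityMeasure μ]
    (T : X ≃ᵐ X) (hT : MeasurePreserving T μ μ) (herg : Ergodic T μ)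
    (htrans : ∀ U V : Set (ProbabilityMeasure (X × X)), IsOpen U → IsOpen V →
      (U ∩ couplingSet μ).Nonempty → (V ∩ couplingSet μ).Nonempty →
      ∃ n : ℕ, ((lensP T)^[n] ⁻¹' U ∩ V ∩ couplingSet μ).Nonempty) :
    Ergodic (Prod.map ⇑T ⇑T) (μ.prod μ) := by
  have hTsymm : MeasurePreserving (⇑T.symm) μ μ := MeasurePreserving.symm T hT
  refine ⟨hT.prod hT, ⟨fun s hs hsi => ?_⟩⟩
  rw [Filter.eventuallyConst_set']
  by_contra hcon
  push_neg at hcon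
  obtain ⟨h0, h1⟩ := hcon
  set ν : Measure (X × X) := μ.prod μ with hνdef
  -- basic measure facts
  have hν0 : ν s ≠ 0 := fun h => h0 (ae_eq_empty.mpr h)
  have hνc : ν sᶜ ≠ 0 := fun h => h1 (ae_eq_univ.mpr h)
  have hνs1 : ν s ≠ 1 := fun h => hνc ((prob_compl_eq_zero_iff hs).mpr h)
  set m : ℝ := (ν s).toReal with hmdef
  have hm0 : 0 < m := ENNReal.toReal_pos hν0 (measure_ne_top ν s)
  have hνslt : ν s < 1 := (prob_le_one).lt_of_ne hνs1
  have hm1 : m < 1 := by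
    have := ENNReal.toReal_strict_mono ENNReal.one_ne_top hνslt
    simpa using this
  -- the kernel k = 1_s - m
  set k : X × X → ℝ := fun p => Set.indicator s (fun _ => (1:ℝ)) p - m with hkdef
  have hk_meas : Measurable k := (measurable_const.indicator hs).sub measurable_const
  have hk_sm : StronglyMeasurable k := hk_meas.stronglyMeasurable
  have hk_eval : ∀ p : X × X, k p = s.indicator (fun _ => (1:ℝ)) p - m := fun p => rfl
  have hk_abs : ∀ p, |k p| ≤ 1 := by
    intro p
    by_cases hp : p ∈ s
    · rw [hk_eval, Set.indicator_of_mem hp, abs_le]; constructor <;> linarith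
    · rw [hk_eval, Set.indicator_of_notMem hp, abs_le]; constructor <;> linarith
  have hk_congr : ∀ {p q : X × X}, (p ∈ s ↔ q ∈ s) → k p = k q := by
    intro p q h
    by_cases hp : p ∈ s
    · rw [hk_eval, hk_eval, Set.indicator_of_mem hp, Set.indicator_of_mem (h.mp hp)]
    · rw [hk_eval, hk_eval, Set.indicator_of_notMem hp,
        Set.indicator_of_notMem (fun hq => hp (h.mpr hq))]
  have H : ∀ p : X × X, p ∈ s ↔ (T p.1, T p.2) ∈ s := by
    intro p
    nth_rewrite 1 [← hsi]
    exact Iff.rfl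
  have hmem1 : ∀ u x : X, k (u, T x) = k (T.symm u, x) := by
    intro u x
    apply hk_congr
    have h2 := (H (T.symm u, x)).symm
    rwa [T.apply_symm_apply] at h2
  have hmem2 : ∀ u x : X, k (T u, x) = k (u, T.symm x) := by
    intro u x
    apply hk_congr
    have h2 := (H (u, T.symm x)).symm
    rwa [T.apply_symm_apply] at h2
  have hk_int : Integrable k ν := lens_integrable_of_abs_le hk_sm.aestronglyMeasurable hk_abs
  -- integral of k over ν is 0
  have hk_integral : ∫ p, k p ∂ν = 0 := by
    rw [hkdef]
    rw [integral_sub ((integrable_const (1:ℝ)).indicator hs) (integrable_const m)]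
    rw [integral_indicator_const (1:ℝ) hs, integral_const]
    simp [hmdef, smul_eq_mul, measureReal_def]
  -- the function ζ u = ∫ x, k (u, x) dμ
  set ζ : X → ℝ := fun u => ∫ x, k (u, x) ∂μ with hζdef
  have hζ_sm : StronglyMeasurable ζ := hk_sm.integral_prod_right'
  have hζ_abs : ∀ u, |ζ u| ≤ 1 := by
    intro u
    have h1 : |ζ u| ≤ ∫ x, |k (u, x)| ∂μ := by
      simpa [Real.norm_eq_abs] using
        norm_integral_le_integral_norm (μ := μ) (fun x => k (u, x))
    refine h1.trans ?_
    have h2 : ∫ x, |k (u, x)| ∂μ ≤ ∫ _x, (1:ℝ) ∂μ := by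
      refine integral_mono ?_ (integrable_const 1) (fun x => hk_abs (u, x))
      refine lens_integrable_of_abs_le (f := fun x => |k (u, x)|) ?_ (C := 1)
        (fun x => by simpa [abs_abs] using hk_abs (u, x))
      exact ((hk_meas.comp (measurable_const.prodMk measurable_id)).abs).stronglyMeasurable.aestronglyMeasurable
    simpa using h2
  have hζ_inv : ∀ u, ζ (T u) = ζ u := by
    intro u
    have h1 : ζ (T u) = ∫ x, k (u, T.symm x) ∂μ := by
      simp only [hζdef]
      exact integral_congr_ae (Filter.Eventually.of_forall fun x => hmem2 u x)
    rw [h1]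
    exact hTsymm.integral_comp' (fun x => k (u, x))
  -- ζ is a.e. 0 by ergodicity
  obtain ⟨c0, hc0⟩ := herg.toPreErgodic.ae_eq_const_of_ae_eq_comp hζ_sm.measurable
    (funext fun u => hζ_inv u)
  have hζ_int_eq : ∫ u, ζ u ∂μ = 0 := by
    have h1 : ∫ u, ζ u ∂μ = ∫ p, k p ∂ν := by
      rw [hνdef, ← MeasureTheory.integral_prod k hk_int]
    rw [h1, hk_integral]
  have hc0_zero : c0 = 0 := by
    have h1 : ∫ u, ζ u ∂μ = c0 := by
      rw [integral_congr_ae hc0]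
      simp
    rw [hζ_int_eq] at h1
    exact h1.symm
  have hζ_ae0 : ζ =ᵐ[μ] fun _ => (0:ℝ) := by rwa [hc0_zero] at hc0
  -- the function hfun q = ∫ u, k (u, q.1) * k (u, q.2) dμ
  set hfun : X × X → ℝ := fun q => ∫ u, k (u, q.1) * k (u, q.2) ∂μ with hhdef
  have hF_meas : Measurable fun z : X × (X × X) => k (z.1, z.2.1) * k (z.1, z.2.2) :=
    (hk_meas.comp (measurable_fst.prodMk (measurable_fst.comp measurable_snd))).mul
      (hk_meas.comp (measurable_fst.prodMk (measurable_snd.comp measurable_snd)))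
  have hfun_sm : StronglyMeasurable hfun := hF_meas.stronglyMeasurable.integral_prod_left'
  have hprod_int : ∀ q : X × X, Integrable (fun u => k (u, q.1) * k (u, q.2)) μ := by
    intro q
    refine lens_integrable_of_abs_le ?_ (C := 1) ?_
    · exact ((hk_meas.comp (measurable_id.prodMk measurable_const)).mul
        (hk_meas.comp (measurable_id.prodMk measurable_const))).stronglyMeasurable.aestronglyMeasurable
    · intro u
      rw [abs_mul]
      exact mul_le_one₀ (hk_abs _) (abs_nonneg _) (hk_abs _)
  have hfun_abs : ∀ q, |hfun q| ≤ 1 := by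
    intro q
    have h1 : |hfun q| ≤ ∫ u, |k (u, q.1)| * |k (u, q.2)| ∂μ := by
      simpa [Real.norm_eq_abs, abs_mul] using
        norm_integral_le_integral_norm (μ := μ) (fun u => k (u, q.1) * k (u, q.2))
    refine h1.trans ?_
    have hint : Integrable (fun u => |k (u, q.1)| * |k (u, q.2)|) μ := by
      simpa [abs_mul] using (hprod_int q).abs
    have h2 : ∫ u, |k (u, q.1)| * |k (u, q.2)| ∂μ ≤ ∫ _u, (1:ℝ) ∂μ := by
      refine integral_mono hint (integrable_const 1) (fun u => ?_)
      exact mul_le_one₀ (hk_abs _) (abs_nonneg _) (hk_abs _)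
    simpa using h2
  -- invariance of hfun
  have hfun_inv : ∀ q : X × X, hfun (T q.1, T q.2) = hfun q := by
    intro q
    have h1 : hfun (T q.1, T q.2) = ∫ u, k (T.symm u, q.1) * k (T.symm u, q.2) ∂μ := by
      simp only [hhdef]
      refine integral_congr_ae (Filter.Eventually.of_forall fun u => ?_)
      show k (u, T q.1) * k (u, T q.2) = k (T.symm u, q.1) * k (T.symm u, q.2)
      rw [hmem1, hmem1]
    rw [h1]
    exact hTsymm.integral_comp' (fun v => k (v, q.1) * k (v, q.2))
  -- the functional Ψ
  set Ψ : ProbabilityMeasure (X × X) → ℝ :=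
    fun ξ => ∫ q, hfun q ∂(ξ : Measure (X × X)) with hΨdef
  have hΨ_lens : ∀ ξ : ProbabilityMeasure (X × X), Ψ (lensP T ξ) = Ψ ξ := by
    intro ξ
    have hcoe : ((lensP T ξ : ProbabilityMeasure (X × X)) : Measure (X × X)) =
        Measure.map (⇑(T.prodCongr T)) (ξ : Measure (X × X)) := by
      simp [lensP]
    simp only [hΨdef, hcoe]
    rw [integral_map (T.prodCongr T).measurable.aemeasurable
      hfun_sm.aestronglyMeasurable]
    exact integral_congr_ae (Filter.Eventually.of_forall fun q => hfun_inv q)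
  have hΨ_iter : ∀ (n : ℕ) (ξ : ProbabilityMeasure (X × X)), Ψ ((lensP T)^[n] ξ) = Ψ ξ := by
    intro n
    induction n with
    | zero => intro ξ; rfl
    | succ n ih =>
      intro ξ
      rw [Function.iterate_succ_apply', hΨ_lens, ih]
  -- lens preserves couplings
  have hlens_cpl : ∀ ξ : ProbabilityMeasure (X × X), ξ ∈ couplingSet μ →
      lensP T ξ ∈ couplingSet μ := by
    intro ξ hξ
    have he : Measurable (⇑(T.prodCongr T)) := (T.prodCongr T).measurable
    have hcoe : ((lensP T ξ : ProbabilityMeasure (X × X)) : Measure (X × X)) =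
        Measure.map (⇑(T.prodCongr T)) (ξ : Measure (X × X)) := by
      simp [lensP]
    constructor
    · show ((lensP T ξ : ProbabilityMeasure (X × X)) : Measure (X × X)).map Prod.fst = μ
      rw [hcoe, Measure.map_map measurable_fst he]
      have hcomp : Prod.fst ∘ ⇑(T.prodCongr T) = ⇑T ∘ Prod.fst := rfl
      rw [hcomp, ← Measure.map_map T.measurable measurable_fst, hξ.1, hT.map_eq]
    · show ((lensP T ξ : ProbabilityMeasure (X × X)) : Measure (X × X)).map Prod.snd = μ
      rw [hcoe, Measure.map_map measurable_snd he]
      have hcomp : Prod.snd ∘ ⇑(T.prodCongr T) = ⇑T ∘ Prod.snd := rfl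
      rw [hcomp, ← Measure.map_map T.measurable measurable_snd, hξ.2, hT.map_eq]
  have hlens_cpl_iter : ∀ (n : ℕ) (ξ : ProbabilityMeasure (X × X)), ξ ∈ couplingSet μ →
      (lensP T)^[n] ξ ∈ couplingSet μ := by
    intro n
    induction n with
    | zero => intro ξ hξ; exact hξ
    | succ n ih =>
      intro ξ hξ
      rw [Function.iterate_succ_apply']
      exact hlens_cpl _ (ih ξ hξ)
  -- the two special couplings
  have hdiag_meas : Measurable (fun x : X => (x, x)) := measurable_id.prodMk measurable_id
  set PΔ : ProbabilityMeasure (X × X) :=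
    ⟨Measure.map (fun x : X => (x, x)) μ, Measure.isProbabilityMeasure_map hdiag_meas.aemeasurable⟩
    with hPΔdef
  have hPΔcoe : (PΔ : Measure (X × X)) = Measure.map (fun x : X => (x, x)) μ := rfl
  have hPΔ_cpl : PΔ ∈ couplingSet μ := by
    constructor
    · show (PΔ : Measure (X × X)).map Prod.fst = μ
      rw [hPΔcoe, Measure.map_map measurable_fst hdiag_meas]
      have : Prod.fst ∘ (fun x : X => (x, x)) = id := rfl
      rw [this, Measure.map_id]
    · show (PΔ : Measure (X × X)).map Prod.snd = μ
      rw [hPΔcoe, Measure.map_map measurable_snd hdiag_meas]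
      have : Prod.snd ∘ (fun x : X => (x, x)) = id := rfl
      rw [this, Measure.map_id]
  set Pp : ProbabilityMeasure (X × X) := ⟨ν, by rw [hνdef]; infer_instance⟩ with hPpdef
  have hPpcoe : (Pp : Measure (X × X)) = ν := rfl
  have hPp_cpl : Pp ∈ couplingSet μ := by
    constructor
    · show (Pp : Measure (X × X)).map Prod.fst = μ
      rw [hPpcoe, hνdef, Measure.map_fst_prod]
      simp
    · show (Pp : Measure (X × X)).map Prod.snd = μ
      rw [hPpcoe, hνdef, Measure.map_snd_prod]
      simp
  -- value of Ψ on the diagonal coupling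
  set a : ℝ := m - m * m with hadef
  have ha : 0 < a := by nlinarith
  have hswap_mp : MeasurePreserving (Prod.swap : X × X → X × X) ν ν := by
    rw [hνdef]; exact Measure.measurePreserving_swap
  have hswap_me : MeasurableEmbedding (Prod.swap : X × X → X × X) :=
    (MeasurableEquiv.prodComm (α := X) (β := X)).measurableEmbedding
  have hΨΔ : Ψ PΔ = a := by
    have h1 : Ψ PΔ = ∫ x, hfun (x, x) ∂μ := by
      simp only [hΨdef, hPΔcoe]
      exact integral_map hdiag_meas.aemeasurable hfun_sm.aestronglyMeasurable
    have hkk_int : Integrable (Function.uncurry fun x u => k (u, x) * k (u, x)) ν := by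
      refine lens_integrable_of_abs_le ?_ (C := 1) ?_
      · exact ((hk_meas.comp (measurable_snd.prodMk measurable_fst)).mul
          (hk_meas.comp (measurable_snd.prodMk measurable_fst))).stronglyMeasurable.aestronglyMeasurable
      · intro z
        rw [Function.uncurry]
        rw [abs_mul]
        exact mul_le_one₀ (hk_abs _) (abs_nonneg _) (hk_abs _)
    have h2 : ∫ x, hfun (x, x) ∂μ = ∫ z : X × X, k (z.2, z.1) * k (z.2, z.1) ∂ν := by
      simp only [hhdef]
      exact MeasureTheory.integral_integral hkk_int
    have h3 : ∫ z : X × X, k (z.2, z.1) * k (z.2, z.1) ∂ν = ∫ p, k p * k p ∂ν := by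
      have := hswap_mp.integral_comp hswap_me (fun w => k w * k w)
      simpa [Prod.swap] using this
    have h4 : ∫ p, k p * k p ∂ν =
        ∫ p, (Set.indicator s (fun _ => (1:ℝ)) p * (1 - 2 * m) + m * m) ∂ν := by
      refine integral_congr_ae (Filter.Eventually.of_forall fun p => ?_)
      show k p * k p = Set.indicator s (fun _ => (1:ℝ)) p * (1 - 2 * m) + m * m
      by_cases hp : p ∈ s
      · simp only [hk_eval, Set.indicator_of_mem hp]; ring
      · simp only [hk_eval, Set.indicator_of_notMem hp]; ring
    have h5 : ∫ p, (Set.indicator s (fun _ => (1:ℝ)) p * (1 - 2 * m) + m * m) ∂ν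
        = m * (1 - 2 * m) + m * m := by
      rw [integral_add (((integrable_const (1:ℝ)).indicator hs).mul_const _)
        (integrable_const _)]
      rw [integral_mul_const, integral_indicator_const (1:ℝ) hs, integral_const]
      simp [hmdef, smul_eq_mul, measureReal_def]
    rw [h1, h2, h3, h4, h5, hadef]; ring
  -- value of Ψ on the product coupling
  have hΨp : Ψ Pp = 0 := by
    have hfun_int_ν : Integrable hfun ν :=
      lens_integrable_of_abs_le hfun_sm.aestronglyMeasurable hfun_abs
    have h1 : Ψ Pp = ∫ x, ∫ y, hfun (x, y) ∂μ ∂μ := by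
      simp only [hΨdef, hPpcoe, hνdef]
      exact MeasureTheory.integral_prod hfun (by rwa [← hνdef])
    have h2 : ∀ x, ∫ y, hfun (x, y) ∂μ = ∫ u, k (u, x) * ζ u ∂μ := by
      intro x
      have hswap_int : Integrable (Function.uncurry fun y u => k (u, x) * k (u, y)) ν := by
        refine lens_integrable_of_abs_le ?_ (C := 1) ?_
        · exact ((hk_meas.comp (measurable_snd.prodMk measurable_const)).mul
            (hk_meas.comp (measurable_snd.prodMk measurable_fst))).stronglyMeasurable.aestronglyMeasurable
        · intro z
          rw [Function.uncurry, abs_mul]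
          exact mul_le_one₀ (hk_abs _) (abs_nonneg _) (hk_abs _)
      have hsw := MeasureTheory.integral_integral_swap hswap_int
      simp only [hhdef]
      rw [show (∫ y, ∫ u, k (u, x) * k (u, y) ∂μ ∂μ)
          = ∫ u, ∫ y, k (u, x) * k (u, y) ∂μ ∂μ from hsw]
      refine integral_congr_ae (Filter.Eventually.of_forall fun u => ?_)
      show ∫ y, k (u, x) * k (u, y) ∂μ = k (u, x) * ζ u
      rw [integral_const_mul]
    have h3 : ∫ x, ∫ u, k (u, x) * ζ u ∂μ ∂μ = ∫ u, ζ u * ζ u ∂μ := by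
      have hswap_int : Integrable (Function.uncurry fun x u => k (u, x) * ζ u) ν := by
        refine lens_integrable_of_abs_le ?_ (C := 1) ?_
        · exact ((hk_meas.comp (measurable_snd.prodMk measurable_fst)).mul
            (hζ_sm.measurable.comp measurable_snd)).stronglyMeasurable.aestronglyMeasurable
        · intro z
          rw [Function.uncurry, abs_mul]
          exact mul_le_one₀ (hk_abs _) (abs_nonneg _) (hζ_abs _)
      have hsw := MeasureTheory.integral_integral_swap hswap_int
      rw [show (∫ x, ∫ u, k (u, x) * ζ u ∂μ ∂μ)
          = ∫ u, ∫ x, k (u, x) * ζ u ∂μ ∂μ from hsw]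
      refine integral_congr_ae (Filter.Eventually.of_forall fun u => ?_)
      show ∫ x, k (u, x) * ζ u ∂μ = ζ u * ζ u
      rw [integral_mul_const]
    have h4 : ∫ u, ζ u * ζ u ∂μ = 0 := by
      have : (fun u => ζ u * ζ u) =ᵐ[μ] fun _ => (0:ℝ) := by
        filter_upwards [hζ_ae0] with u hu
        rw [hu]; ring
      rw [integral_congr_ae this]
      simp
    rw [h1]
    rw [integral_congr_ae (Filter.Eventually.of_forall h2), h3, h4]
  -- continuous approximation of k
  have hε24 : (0:ℝ) < a / 24 := by linarith
  obtain ⟨g, hg_close, hg_int⟩ :=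
    hk_int.exists_boundedContinuous_integral_sub_le hε24
  set c : X × X → ℝ := fun p => max (-1) (min 1 (g p)) with hcdef
  have hc_cont : Continuous c := continuous_const.max (continuous_const.min g.continuous)
  have hc_abs : ∀ p, |c p| ≤ 1 := by
    intro p
    rw [abs_le]
    constructor
    · exact le_max_left _ _
    · exact max_le (by norm_num) (min_le_left _ _)
  have hc_int : Integrable c ν :=
    lens_integrable_of_abs_le hc_cont.aestronglyMeasurable hc_abs
  have hE : ∫ p, |k p - c p| ∂ν ≤ a / 24 := by
    refine le_trans ?_ hg_close
    refine integral_mono ((hk_int.sub hc_int).abs) (hk_int.sub hg_int).norm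
      (fun p => ?_)
    simp only [Real.norm_eq_abs]
    exact lens_abs_sub_clamp_le (hk_abs p)
  -- the deviation function d
  set d : X → ℝ := fun x => ∫ u, |k (u, x) - c (u, x)| ∂μ with hddef
  have hkc_meas : Measurable fun z : X × X => |k z - c z| :=
    (hk_meas.sub hc_cont.measurable).abs
  have hd_sm : StronglyMeasurable d := hkc_meas.stronglyMeasurable.integral_prod_left'
  have hkc_abs : ∀ z, |(|k z - c z|)| ≤ 2 := by
    intro z
    rw [abs_abs]
    calc |k z - c z| ≤ |k z| + |c z| := abs_sub _ _
      _ ≤ 2 := by linarith [hk_abs z, hc_abs z]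
  have hd_nonneg : ∀ x, 0 ≤ d x := fun x =>
    integral_nonneg fun u => abs_nonneg _
  have hd_abs : ∀ x, |d x| ≤ 2 := by
    intro x
    rw [abs_of_nonneg (hd_nonneg x)]
    have h2 : ∫ u, |k (u, x) - c (u, x)| ∂μ ≤ ∫ _u, (2:ℝ) ∂μ := by
      refine integral_mono ?_ (integrable_const 2) (fun u => by
        simpa [abs_abs] using hkc_abs (u, x))
      refine lens_integrable_of_abs_le (f := fun u => |k (u, x) - c (u, x)|) ?_ (C := 2)
        (fun u => hkc_abs (u, x))
      exact ((hkc_meas.comp (measurable_id.prodMk measurable_const))).stronglyMeasurable.aestronglyMeasurable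
    simpa using h2
  have hd_int : Integrable d μ :=
    lens_integrable_of_abs_le hd_sm.aestronglyMeasurable hd_abs
  have hint_d1 : ∀ y : X, Integrable (fun u => |k (u, y) - c (u, y)|) μ := by
    intro y
    refine lens_integrable_of_abs_le (f := fun u => |k (u, y) - c (u, y)|) ?_ (C := 2)
      (fun u => hkc_abs (u, y))
    exact ((hkc_meas.comp (measurable_id.prodMk measurable_const))).stronglyMeasurable.aestronglyMeasurable
  have hd_integral : ∫ x, d x ∂μ ≤ a / 24 := by
    have hswap_int : Integrable (Function.uncurry fun x u => |k (u, x) - c (u, x)|) ν := by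
      refine lens_integrable_of_abs_le ?_ (C := 2) ?_
      · exact (hkc_meas.comp (measurable_snd.prodMk measurable_fst)).stronglyMeasurable.aestronglyMeasurable
      · intro z
        rw [Function.uncurry]
        exact hkc_abs _
    have h1 : ∫ x, d x ∂μ = ∫ z : X × X, |k (z.2, z.1) - c (z.2, z.1)| ∂ν := by
      simp only [hddef]
      exact MeasureTheory.integral_integral hswap_int
    have h2 : ∫ z : X × X, |k (z.2, z.1) - c (z.2, z.1)| ∂ν = ∫ p, |k p - c p| ∂ν := by
      have := hswap_mp.integral_comp hswap_me (fun w => |k w - c w|)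
      simpa [Prod.swap] using this
    rw [h1, h2]
    exact hE
  -- the continuous approximating kernel
  set hcfun : X × X → ℝ := fun q => ∫ u, c (u, q.1) * c (u, q.2) ∂μ with hcfdef
  have hcfun_cont : Continuous hcfun := by
    refine MeasureTheory.continuous_of_dominated (bound := fun _ => (1:ℝ)) ?_ ?_ ?_ ?_
    · intro q
      exact ((hc_cont.comp (continuous_id.prodMk continuous_const)).mul
        (hc_cont.comp (continuous_id.prodMk continuous_const))).aestronglyMeasurable
    · intro q
      refine Filter.Eventually.of_forall fun u => ?_
      rw [Real.norm_eq_abs, abs_mul]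
      exact mul_le_one₀ (hc_abs _) (abs_nonneg _) (hc_abs _)
    · exact integrable_const 1
    · refine Filter.Eventually.of_forall fun u => ?_
      exact (hc_cont.comp (continuous_const.prodMk continuous_fst)).mul
        (hc_cont.comp (continuous_const.prodMk continuous_snd))
  have hcfun_abs : ∀ q, |hcfun q| ≤ 1 := by
    intro q
    have hint : Integrable (fun u => c (u, q.1) * c (u, q.2)) μ := by
      refine lens_integrable_of_abs_le ?_ (C := 1) ?_
      · exact ((hc_cont.comp (continuous_id.prodMk continuous_const)).mul
          (hc_cont.comp (continuous_id.prodMk continuous_const))).aestronglyMeasurable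
      · intro u
        rw [abs_mul]
        exact mul_le_one₀ (hc_abs _) (abs_nonneg _) (hc_abs _)
    have h1 : |hcfun q| ≤ ∫ u, |c (u, q.1)| * |c (u, q.2)| ∂μ := by
      simpa [Real.norm_eq_abs, abs_mul] using
        norm_integral_le_integral_norm (μ := μ) (fun u => c (u, q.1) * c (u, q.2))
    refine h1.trans ?_
    have hint2 : Integrable (fun u => |c (u, q.1)| * |c (u, q.2)|) μ := by
      simpa [abs_mul] using hint.abs
    have h2 : ∫ u, |c (u, q.1)| * |c (u, q.2)| ∂μ ≤ ∫ _u, (1:ℝ) ∂μ := by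
      refine integral_mono hint2 (integrable_const 1) (fun u => ?_)
      exact mul_le_one₀ (hc_abs _) (abs_nonneg _) (hc_abs _)
    simpa using h2
  -- the continuous functional Ψc
  set Ψc : ProbabilityMeasure (X × X) → ℝ :=
    fun ξ => ∫ q, hcfun q ∂(ξ : Measure (X × X)) with hΨcdef
  have hΨc_cont : Continuous Ψc := by
    have hb := MeasureTheory.ProbabilityMeasure.continuous_integral_boundedContinuousFunction
      (X := X × X) (BoundedContinuousFunction.mkOfCompact ⟨hcfun, hcfun_cont⟩)
    simpa [hΨcdef] using hb
  -- marginal computation for couplings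
  have hmarg1 : ∀ (ξ : ProbabilityMeasure (X × X)), ξ ∈ couplingSet μ →
      ∫ q, d q.1 ∂(ξ : Measure (X × X)) = ∫ x, d x ∂μ := by
    intro ξ hξ
    conv_rhs => rw [← hξ.1]
    rw [integral_map measurable_fst.aemeasurable hd_sm.aestronglyMeasurable]
  have hmarg2 : ∀ (ξ : ProbabilityMeasure (X × X)), ξ ∈ couplingSet μ →
      ∫ q, d q.2 ∂(ξ : Measure (X × X)) = ∫ x, d x ∂μ := by
    intro ξ hξ
    conv_rhs => rw [← hξ.2]
    rw [integral_map measurable_snd.aemeasurable hd_sm.aestronglyMeasurable]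
  -- uniform error bound on couplings
  have herr : ∀ (ξ : ProbabilityMeasure (X × X)), ξ ∈ couplingSet μ →
      |Ψ ξ - Ψc ξ| ≤ a / 12 := by
    intro ξ hξ
    have hfin : IsFiniteMeasure (ξ : Measure (X × X)) := by infer_instance
    have hfun_int : Integrable hfun (ξ : Measure (X × X)) :=
      lens_integrable_of_abs_le hfun_sm.aestronglyMeasurable hfun_abs
    have hcfun_int : Integrable hcfun (ξ : Measure (X × X)) :=
      lens_integrable_of_abs_le hcfun_cont.aestronglyMeasurable hcfun_abs
    have h1 : Ψ ξ - Ψc ξ = ∫ q, (hfun q - hcfun q) ∂(ξ : Measure (X × X)) := by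
      rw [integral_sub hfun_int hcfun_int]
    have hpt : ∀ q : X × X, |hfun q - hcfun q| ≤ d q.1 + d q.2 := by
      intro q
      have hint_c : Integrable (fun u => c (u, q.1) * c (u, q.2)) μ := by
        refine lens_integrable_of_abs_le ?_ (C := 1) ?_
        · exact ((hc_cont.comp (continuous_id.prodMk continuous_const)).mul
            (hc_cont.comp (continuous_id.prodMk continuous_const))).aestronglyMeasurable
        · intro u
          rw [abs_mul]
          exact mul_le_one₀ (hc_abs _) (abs_nonneg _) (hc_abs _)
      have e1 : hfun q - hcfun q
          = ∫ u, (k (u, q.1) * k (u, q.2) - c (u, q.1) * c (u, q.2)) ∂μ := by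
        rw [integral_sub (hprod_int q) hint_c]
      have e2 : |hfun q - hcfun q|
          ≤ ∫ u, |k (u, q.1) * k (u, q.2) - c (u, q.1) * c (u, q.2)| ∂μ := by
        rw [e1]
        simpa [Real.norm_eq_abs] using norm_integral_le_integral_norm (μ := μ)
          (fun u => k (u, q.1) * k (u, q.2) - c (u, q.1) * c (u, q.2))
      refine e2.trans ?_
      have e3 : ∫ u, |k (u, q.1) * k (u, q.2) - c (u, q.1) * c (u, q.2)| ∂μ
          ≤ ∫ u, (|k (u, q.1) - c (u, q.1)| + |k (u, q.2) - c (u, q.2)|) ∂μ := by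
        refine integral_mono ((hprod_int q).sub hint_c).abs ?_ (fun u => ?_)
        · exact Integrable.add (hint_d1 q.1) (hint_d1 q.2)
        · have e4 : k (u, q.1) * k (u, q.2) - c (u, q.1) * c (u, q.2)
              = (k (u, q.1) - c (u, q.1)) * k (u, q.2)
                + c (u, q.1) * (k (u, q.2) - c (u, q.2)) := by ring
          rw [e4]
          calc |(k (u, q.1) - c (u, q.1)) * k (u, q.2)
                + c (u, q.1) * (k (u, q.2) - c (u, q.2))|
              ≤ |(k (u, q.1) - c (u, q.1)) * k (u, q.2)|
                + |c (u, q.1) * (k (u, q.2) - c (u, q.2))| := abs_add_le _ _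
            _ = |k (u, q.1) - c (u, q.1)| * |k (u, q.2)|
                + |c (u, q.1)| * |k (u, q.2) - c (u, q.2)| := by rw [abs_mul, abs_mul]
            _ ≤ |k (u, q.1) - c (u, q.1)| * 1 + 1 * |k (u, q.2) - c (u, q.2)| := by
                have h2a := mul_le_mul_of_nonneg_left (hk_abs (u, q.2))
                  (abs_nonneg (k (u, q.1) - c (u, q.1)))
                have h2b := mul_le_mul_of_nonneg_right (hc_abs (u, q.1))
                  (abs_nonneg (k (u, q.2) - c (u, q.2)))
                linarith
            _ = |k (u, q.1) - c (u, q.1)| + |k (u, q.2) - c (u, q.2)| := by ring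
      refine e3.trans ?_
      rw [integral_add (hint_d1 q.1) (hint_d1 q.2)]
    have h2 : |Ψ ξ - Ψc ξ| ≤ ∫ q, |hfun q - hcfun q| ∂(ξ : Measure (X × X)) := by
      rw [h1]
      simpa [Real.norm_eq_abs] using
        norm_integral_le_integral_norm (μ := (ξ : Measure (X × X)))
          (fun q => hfun q - hcfun q)
    refine h2.trans ?_
    have hd1_int : Integrable (fun q : X × X => d q.1) (ξ : Measure (X × X)) := by
      refine lens_integrable_of_abs_le (f := fun q : X × X => d q.1) ?_ (C := 2)
        (fun q => hd_abs q.1)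
      exact (hd_sm.measurable.comp measurable_fst).stronglyMeasurable.aestronglyMeasurable
    have hd2_int : Integrable (fun q : X × X => d q.2) (ξ : Measure (X × X)) := by
      refine lens_integrable_of_abs_le (f := fun q : X × X => d q.2) ?_ (C := 2)
        (fun q => hd_abs q.2)
      exact (hd_sm.measurable.comp measurable_snd).stronglyMeasurable.aestronglyMeasurable
    have h3 : ∫ q, |hfun q - hcfun q| ∂(ξ : Measure (X × X))
        ≤ ∫ q, (d q.1 + d q.2) ∂(ξ : Measure (X × X)) := by
      refine integral_mono (hfun_int.sub hcfun_int).abs (hd1_int.add hd2_int) (fun q => hpt q)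
    refine h3.trans ?_
    rw [integral_add hd1_int hd2_int, hmarg1 ξ hξ, hmarg2 ξ hξ]
    linarith [hd_integral]
  -- apply topological transitivity
  set U : Set (ProbabilityMeasure (X × X)) := Ψc ⁻¹' Set.Ioi (a - 2 * (a / 6)) with hUdef
  set V : Set (ProbabilityMeasure (X × X)) := Ψc ⁻¹' Set.Iio (2 * (a / 6)) with hVdef
  have hU_open : IsOpen U := isOpen_Ioi.preimage hΨc_cont
  have hV_open : IsOpen V := isOpen_Iio.preimage hΨc_cont
  have hPΔ_U : PΔ ∈ U := by
    have := herr PΔ hPΔ_cpl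
    rw [abs_le] at this
    simp only [hUdef, Set.mem_preimage, Set.mem_Ioi]
    rw [hΨΔ] at this
    linarith [this.1, this.2]
  have hPp_V : Pp ∈ V := by
    have := herr Pp hPp_cpl
    rw [abs_le] at this
    simp only [hVdef, Set.mem_preimage, Set.mem_Iio]
    rw [hΨp] at this
    linarith [this.1, this.2]
  obtain ⟨n, ξ, hξmem⟩ := htrans U V hU_open hV_open ⟨PΔ, hPΔ_U, hPΔ_cpl⟩ ⟨Pp, hPp_V, hPp_cpl⟩
  obtain ⟨⟨hξU, hξV⟩, hξC⟩ := hξmem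
  -- derive the contradiction
  have hξn_cpl : (lensP T)^[n] ξ ∈ couplingSet μ := hlens_cpl_iter n ξ hξC
  have herr1 := herr ((lensP T)^[n] ξ) hξn_cpl
  have herr2 := herr ξ hξC
  rw [abs_le] at herr1 herr2
  have hΨeq : Ψ ((lensP T)^[n] ξ) = Ψ ξ := hΨ_iter n ξ
  have hU' : Ψc ((lensP T)^[n] ξ) > a - 2 * (a / 6) := hξU
  have hV' : Ψc ξ < 2 * (a / 6) := hξV
  have hup : Ψ ξ < 2 * (a / 6) + a / 12 := by linarith [herr2.1, herr2.2]
  have hdown : Ψ ((lensP T)^[n] ξ) > a - 2 * (a / 6) - a / 12 := by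
    linarith [herr1.1, hU']
  rw [hΨeq] at hdown
  linarith
end
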